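/- Let α be a real root of X³ − 3X − 1. Then the map σ given by σ(α) = −1/(1+α) satisfies σ(α) = −2 − α + α², σ is a field automorphism of ℚ(α) of order 3, and Gal(ℚ(α)/ℚ) is cyclic of order 3 generated by σ. -/

import Mathlib

open IntermediateField Polynomial

set_option maxHeartbeats 1000000 in
set_option synthInstance.maxHeartbeats 400000 in

theorem stmt_10 (α : ℝ) (hα : α ^ 3 - 3 * α - 1 = 0) :
    ∃ σ : ℚ⟮α⟯ ≃ₐ[ℚ] ℚ⟮α⟯,
      σ (AdjoinSimple.gen ℚ α) = -1 / (1 + AdjoinSimple.gen ℚ α) ∧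
      σ (AdjoinSimple.gen ℚ α) =
        -2 - AdjoinSimple.gen ℚ α + (AdjoinSimple.gen ℚ α) ^ 2 ∧
      orderOf σ = 3 ∧
      IsCyclic (ℚ⟮α⟯ ≃ₐ[ℚ] ℚ⟮α⟯) ∧
      Nat.card (ℚ⟮α⟯ ≃ₐ[ℚ] ℚ⟮α⟯) = 3 ∧
      ∀ τ : ℚ⟮α⟯ ≃ₐ[ℚ] ℚ⟮α⟯, τ ∈ Subgroup.zpowers σ := by
  set p : ℚ[X] := X ^ 3 - C 3 * X - 1 with hp
  have hmonic : p.Monic := by unfold p; monicity!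
  have hdeg : p.natDegree = 3 := by unfold p; compute_degree!
  have haroot : aeval α p = 0 := by
    unfold p
    simp only [map_sub, map_mul, map_pow, aeval_X, aeval_C, map_one, map_ofNat]
    linear_combination hα
  have hint : IsIntegral ℚ α := ⟨p, hmonic, haroot⟩
  -- irreducibility of p over ℚ
  have hirr : Irreducible p := by
    rw [Polynomial.irreducible_iff_roots_eq_zero_of_degree_le_three (by omega) (by omega)]
    by_contra h
    obtain ⟨r, hr⟩ := Multiset.exists_mem_of_ne_zero h
    have hr0 : r ^ 3 - (3 : ℚ) * r - 1 = 0 := by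
      have := (mem_roots hmonic.ne_zero).mp hr
      simpa [p, IsRoot.def] using this
    have hrz : aeval r (X ^ 3 - C 3 * X - 1 : ℤ[X]) = 0 := by
      simp only [map_sub, map_mul, map_pow, aeval_X, aeval_C, map_one, map_ofNat]
      push_cast
      linear_combination hr0
    obtain ⟨r', hre, hdvd⟩ := exists_integer_of_is_root_of_monic (by monicity!) hrz
    have hc : ((X ^ 3 - C 3 * X - 1 : ℤ[X])).coeff 0 = -1 := by
      simp [coeff_one]
    rw [hc] at hdvd
    have hu : IsUnit r' := isUnit_of_dvd_unit hdvd isUnit_one.neg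
    rcases Int.isUnit_iff.mp hu with h1 | h1 <;> subst h1 <;>
      rw [hre] at hr0 <;> norm_num at hr0
  have hminp : minpoly ℚ α = p := (minpoly.eq_of_irreducible_of_monic hirr haroot hmonic).symm
  haveI : FiniteDimensional ℚ ℚ⟮α⟯ := adjoin.finiteDimensional hint
  set g : ℚ⟮α⟯ := AdjoinSimple.gen ℚ α with hgdef
  -- the basic relation satisfied by g
  have hg : g ^ 3 - 3 * g - 1 = 0 := by
    apply Subtype.ext
    have hcg : (g : ℝ) = α := AdjoinSimple.coe_gen ℚ α
    push_cast [hcg]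
    exact hα
  set γ : ℚ⟮α⟯ := -2 - g + g ^ 2 with hγdef
  -- build σ
  set pb := adjoin.powerBasis hint with hpb
  have hpbg : pb.gen = g := by rw [hpb, adjoin.powerBasis_gen]
  have hroot : aeval γ (minpoly ℚ pb.gen) = 0 := by
    rw [hpbg, hgdef, show minpoly ℚ (AdjoinSimple.gen ℚ α) = minpoly ℚ α from minpoly_gen (F := ℚ) (α := α), hminp]
    simp only [p, map_sub, map_mul, map_pow, aeval_X, aeval_C, map_one, map_ofNat]
    rw [hγdef]
    linear_combination (g ^ 3 - 3 * g ^ 2 + 3) * hg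
  set f : ℚ⟮α⟯ →ₐ[ℚ] ℚ⟮α⟯ := pb.lift γ hroot with hf
  refine ⟨AlgEquiv.ofBijective f f.bijective, ?_⟩
  set σ : ℚ⟮α⟯ ≃ₐ[ℚ] ℚ⟮α⟯ := AlgEquiv.ofBijective f f.bijective with hσdef
  have hσg : σ g = γ := by
    show f g = γ
    rw [← hpbg, hf]
    exact pb.lift_gen γ hroot
  -- extensionality via the power basis
  have ext : ∀ τ₁ τ₂ : ℚ⟮α⟯ ≃ₐ[ℚ] ℚ⟮α⟯, τ₁ g = τ₂ g → τ₁ = τ₂ := by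
    intro τ₁ τ₂ h
    apply AlgEquiv.coe_algHom_injective
    apply pb.algHom_ext
    rw [hpbg]
    exact h
  -- σ² and σ³
  have hσ2 : σ (σ g) = 2 - g ^ 2 := by
    rw [hσg, hγdef]
    have : σ (-2 - g + g ^ 2) = -2 - σ g + (σ g) ^ 2 := by
      simp [map_sub, map_add, map_pow, map_ofNat]
    rw [this, hσg, hγdef]
    linear_combination (g - 2) * hg
  have hσ3 : σ (σ (σ g)) = g := by
    rw [hσ2]
    have : σ (2 - g ^ 2) = 2 - (σ g) ^ 2 := by simp [map_sub, map_pow, map_ofNat]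
    rw [this, hσg, hγdef]
    linear_combination (2 - g) * hg
  have hσpow3 : σ ^ 3 = 1 := by
    apply ext
    show (σ * σ * σ) g = g
    · simpa [AlgEquiv.mul_apply] using hσ3
  have hσne : σ ≠ 1 := by
    intro h
    have hgg : γ = g := by rw [← hσg, h]; rfl
    have h1 : g ^ 2 - 2 * g - 2 = 0 := by
      rw [hγdef] at hgg; linear_combination hgg
    have : (1 : ℚ⟮α⟯) = 0 := by
      linear_combination (1 - g / 3) * hg + (-1 - g / 3 + g ^ 2 / 3) * h1
    exact one_ne_zero this
  haveI : Fact (Nat.Prime 3) := ⟨by norm_num⟩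
  have horder : orderOf σ = 3 := orderOf_eq_prime hσpow3 hσne
  -- every automorphism is a power of σ
  have hall : ∀ τ : ℚ⟮α⟯ ≃ₐ[ℚ] ℚ⟮α⟯, τ ∈ Subgroup.zpowers σ := by
    intro τ
    have hx : (τ g) ^ 3 - 3 * (τ g) - 1 = 0 := by
      have := congrArg τ hg
      simpa [map_sub, map_mul, map_pow, map_ofNat] using this
    have hfac : (τ g - g) * (τ g - γ) * (τ g - (2 - g ^ 2)) = 0 := by
      rw [hγdef]
      linear_combination hx + ((1 - g) * (τ g) + g ^ 2 - g - 1) * hg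
    rcases mul_eq_zero.mp hfac with hfac' | h3
    · rcases mul_eq_zero.mp hfac' with h1 | h2
      · have : τ = 1 := ext _ _ (by rw [sub_eq_zero] at h1; simpa using h1)
        rw [this]; exact Subgroup.one_mem _
      · have : τ = σ := ext _ _ (by rw [sub_eq_zero] at h2; rw [h2, hσg])
        rw [this]; exact Subgroup.mem_zpowers σ
    · have : τ = σ * σ := by
        apply ext
        rw [sub_eq_zero] at h3
        rw [h3, AlgEquiv.mul_apply, hσ2]
      rw [this]
      exact Subgroup.mul_mem _ (Subgroup.mem_zpowers σ) (Subgroup.mem_zpowers σ)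
  have hne0 : (1 : ℚ⟮α⟯) + g ≠ 0 := by
    intro h
    have : (1 : ℚ⟮α⟯) = 0 := by
      linear_combination hg - (g ^ 2 - g - 2) * h
    exact one_ne_zero this
  refine ⟨?_, by rw [hσg, hγdef], horder, ⟨σ, hall⟩, ?_, hall⟩
  · rw [hσg, eq_div_iff hne0, hγdef]
    linear_combination hg
  · have htop : Subgroup.zpowers σ = ⊤ := by
      ext τ; simp [hall τ]
    rw [← Subgroup.card_top, ← htop, Nat.card_zpowers, horder]
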